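/- Suppose the prior is independent with parameter π. Then every unanimous voting rule is ordinally Bayesian incentive compatible if and only if for every j ∈ {1,...,n−1}: C(n−1, j−1) ≤ (π/(1−π))^{n−j} + (π/(1−π))^{1−j}. -/

import Mathlib

open Finset

/-- Auxiliary coefficient. -/
noncomputable def obicD (m : ℕ) (r : ℝ) (j : ℕ) : ℝ :=
  (m.choose (j - 1) : ℝ) - (m.choose j : ℝ) * r

/-- Telescoping sum. -/
lemma obic_tel (m : ℕ) (r : ℝ) (j : ℕ) (h1 : 1 ≤ j) (hj : j ≤ m) :
    ∑ i ∈ Icc j m, obicD m r i * r ^ i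
      = (m.choose (j - 1) : ℝ) * r ^ j - r ^ (m + 1) := by
  set g : ℕ → ℝ := fun i => (m.choose i : ℝ) * r ^ (i + 1) with hg
  have hterm : ∀ i, 1 ≤ i → obicD m r i * r ^ i = g (i - 1) - g i := by
    intro i hi
    simp only [hg, obicD]
    have h1 : i - 1 + 1 = i := by omega
    rw [h1]
    ring
  have : ∑ i ∈ Icc j m, obicD m r i * r ^ i
      = ∑ t ∈ range (m + 1 - j), (g (j - 1 + t) - g (j - 1 + (t + 1))) := by
    rw [← Finset.Ico_add_one_right_eq_Icc, Finset.sum_Ico_eq_sum_range]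
    apply Finset.sum_congr rfl
    intro t _
    rw [hterm (j + t) (by omega)]
    congr 2 <;> omega
  rw [this, Finset.sum_range_sub' (fun t => g (j - 1 + t))]
  have h2 : j - 1 + 0 = j - 1 := by omega
  have h3 : j - 1 + (m + 1 - j) = m := by omega
  rw [h2, h3]
  simp only [hg, Nat.choose_self]
  have h4 : j - 1 + 1 = j := by omega
  rw [h4]
  norm_num

/-- Key combinatorial identity. -/
lemma obic_choose_id (m k : ℕ) (h1 : 1 ≤ k) (hk : k ≤ m) :
    (k : ℝ) * (m.choose k : ℝ) = ((m : ℝ) + 1 - k) * (m.choose (k - 1) : ℝ) := by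
  have h := Nat.choose_succ_right_eq m (k - 1)
  have hk1 : k - 1 + 1 = k := by omega
  rw [hk1] at h
  have hcast : ((m.choose k : ℕ) : ℝ) * ((k : ℕ) : ℝ)
      = ((m.choose (k - 1) : ℕ) : ℝ) * ((m - (k - 1) : ℕ) : ℝ) := by
    exact_mod_cast congrArg (Nat.cast (R := ℝ)) h
  have hsub : ((m - (k - 1) : ℕ) : ℝ) = (m : ℝ) + 1 - k := by
    have : (m - (k - 1)) + (k - 1) = m := by omega
    have := congrArg (Nat.cast (R := ℝ)) this
    push_cast at this
    have hk' : ((k - 1 : ℕ) : ℝ) = (k : ℝ) - 1 := by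
      have : (k - 1) + 1 = k := by omega
      have := congrArg (Nat.cast (R := ℝ)) this
      push_cast at this
      linarith
    rw [hk'] at this
    linarith
  rw [hsub] at hcast
  linarith

/-- Sign threshold property of the coefficients. -/
lemma obic_sign (m : ℕ) (r : ℝ) (hr : 0 < r) {j i : ℕ} (h1 : 1 ≤ j) (hji : j ≤ i)
    (him : i ≤ m) (hdj : 0 < obicD m r j) : 0 ≤ obicD m r i := by
  have hcjpos : (0 : ℝ) < (m.choose (j - 1) : ℝ) := by
    exact_mod_cast Nat.choose_pos (by omega : j - 1 ≤ m)
  have hcipos : (0 : ℝ) < (m.choose (i - 1) : ℝ) := by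
    exact_mod_cast Nat.choose_pos (by omega : i - 1 ≤ m)
  have hidj : (j : ℝ) * (m.choose j : ℝ) = ((m : ℝ) + 1 - j) * (m.choose (j - 1) : ℝ) :=
    obic_choose_id m j h1 (by omega)
  have hidi : (i : ℝ) * (m.choose i : ℝ) = ((m : ℝ) + 1 - i) * (m.choose (i - 1) : ℝ) :=
    obic_choose_id m i (by omega) him
  have hdj' : (m.choose j : ℝ) * r < (m.choose (j - 1) : ℝ) := by
    simp only [obicD] at hdj; linarith
  have hjpos : (0 : ℝ) < (j : ℝ) := by exact_mod_cast h1
  have hipos : (0 : ℝ) < (i : ℝ) := by exact_mod_cast (show 0 < i by omega)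
  -- multiply hdj' by j
  have h5 : ((m : ℝ) + 1 - j) * (m.choose (j - 1) : ℝ) * r < (j : ℝ) * (m.choose (j - 1) : ℝ) := by
    calc ((m : ℝ) + 1 - j) * (m.choose (j - 1) : ℝ) * r
        = (j : ℝ) * ((m.choose j : ℝ) * r) := by rw [← hidj]; ring
      _ < (j : ℝ) * (m.choose (j - 1) : ℝ) := by
          exact (mul_lt_mul_iff_right₀ hjpos).2 hdj'
  have hphi_j : ((m : ℝ) + 1 - j) * r < (j : ℝ) := by
    have := (mul_lt_mul_iff_left₀ hcjpos).1 (by linarith [h5] : (((m : ℝ) + 1 - j) * r) * (m.choose (j-1) : ℝ) < (j : ℝ) * (m.choose (j-1) : ℝ))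
    exact this
  have hji' : (j : ℝ) ≤ (i : ℝ) := by exact_mod_cast hji
  have hphi_i : ((m : ℝ) + 1 - i) * r ≤ (i : ℝ) := by nlinarith
  -- conclude
  simp only [obicD]
  have h6 : (i : ℝ) * ((m.choose i : ℝ) * r) ≤ (i : ℝ) * (m.choose (i - 1) : ℝ) := by
    calc (i : ℝ) * ((m.choose i : ℝ) * r) = (((m : ℝ) + 1 - i) * r) * (m.choose (i - 1) : ℝ) := by
          rw [show (i:ℝ) * ((m.choose i : ℝ) * r) = ((i:ℝ) * (m.choose i : ℝ)) * r by ring, hidi]; ring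
      _ ≤ (i : ℝ) * (m.choose (i - 1) : ℝ) := by
          exact mul_le_mul_of_nonneg_right hphi_i (le_of_lt hcipos)
  have := (mul_le_mul_iff_right₀ hipos).1 h6
  linarith

/-- The key equivalence between the worst-case sum bound and the pointwise condition. -/
lemma obic_keyEquiv (m : ℕ) (hm : 1 ≤ m) (r : ℝ) (hr : 0 < r) :
    (∑ j ∈ Icc 1 m, max (obicD m r j) 0 * r ^ j ≤ r) ↔
    (∀ j, 1 ≤ j → j ≤ m → (m.choose (j - 1) : ℝ) * r ^ j ≤ r ^ (m + 1) + r) := by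
  constructor
  · intro hT j h1 hj
    have htel := obic_tel m r j h1 hj
    have hle1 : ∑ i ∈ Icc j m, obicD m r i * r ^ i
        ≤ ∑ i ∈ Icc j m, max (obicD m r i) 0 * r ^ i := by
      apply Finset.sum_le_sum
      intro i _
      exact mul_le_mul_of_nonneg_right (le_max_left _ _) (le_of_lt (pow_pos hr i))
    have hle2 : ∑ i ∈ Icc j m, max (obicD m r i) 0 * r ^ i
        ≤ ∑ i ∈ Icc 1 m, max (obicD m r i) 0 * r ^ i := by
      apply Finset.sum_le_sum_of_subset_of_nonneg
      · apply Finset.Icc_subset_Icc_left; omega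
      · intro i _ _
        exact mul_nonneg (le_max_right _ _) (le_of_lt (pow_pos hr i))
    have : (m.choose (j - 1) : ℝ) * r ^ j - r ^ (m + 1) ≤ r := by
      rw [← htel]; linarith
    linarith
  · intro hf
    by_cases hex : ∃ j, 1 ≤ j ∧ j ≤ m ∧ 0 < obicD m r j
    · set j₀ := Nat.find hex with hj₀def
      obtain ⟨hj₀1, hj₀m, hj₀pos⟩ := Nat.find_spec hex
      have hcong : ∀ j ∈ Icc 1 m, max (obicD m r j) 0 * r ^ j
          = if j₀ ≤ j then obicD m r j * r ^ j else 0 := by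
        intro j hj
        rw [Finset.mem_Icc] at hj
        by_cases h : j₀ ≤ j
        · rw [if_pos h, max_eq_left (obic_sign m r hr hj₀1 h hj.2 hj₀pos)]
        · rw [if_neg h]
          have hd : obicD m r j ≤ 0 := by
            by_contra hpos
            exact h (Nat.find_min' hex ⟨hj.1, hj.2, lt_of_not_ge hpos⟩)
          rw [max_eq_right hd, zero_mul]
      have hfil : Finset.filter (fun j => j₀ ≤ j) (Icc 1 m) = Icc j₀ m := by
        ext x
        simp only [Finset.mem_filter, Finset.mem_Icc]
        omega
      have hsum : ∑ j ∈ Icc 1 m, max (obicD m r j) 0 * r ^ j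
          = ∑ j ∈ Icc j₀ m, obicD m r j * r ^ j := by
        rw [Finset.sum_congr rfl hcong, ← Finset.sum_filter, hfil]
      rw [hsum, obic_tel m r j₀ hj₀1 hj₀m]
      have := hf j₀ hj₀1 hj₀m
      linarith
    · -- all coefficients nonpositive, so the sum is 0
      have : ∑ j ∈ Icc 1 m, max (obicD m r j) 0 * r ^ j = 0 := by
        apply Finset.sum_eq_zero
        intro j hj
        rw [Finset.mem_Icc] at hj
        have : obicD m r j ≤ 0 := by
          by_contra hpos
          exact hex ⟨j, hj.1, hj.2, lt_of_not_ge hpos⟩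
        rw [max_eq_right this, zero_mul]
      rw [this]; exact le_of_lt hr


/-- Proposition 2, independent prior case: with `B(k) = C(n,k)·π^k·(1−π)^{n−k}`, every
unanimous voting rule is OBIC iff
`C(n−1,j−1) ≤ (π/(1−π))^{n−j} + (π/(1−π))^{1−j}` for every `j ∈ {1,…,n−1}`. -/
theorem all_unanimous_obic_iff_independent_prior_condition
    (n : ℕ) (hn : 2 ≤ n) (π : ℝ) (hπ0 : 0 < π) (hπ1 : π < 1)
    (B : ℕ → ℝ)
    (hB : ∀ k, B k = (n.choose k : ℝ) * π ^ k * (1 - π) ^ (n - k)) :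
    (∀ q : ℕ → ℝ, (∀ k ≤ n, 0 ≤ q k ∧ q k ≤ 1) → q 0 = 0 → q n = 1 →
      ((1 / (n * π)) * ∑ k ∈ range (n + 1), (k : ℝ) * q k * B k
          ≥ (1 / (n * π)) * ∑ k ∈ Icc 1 n, (k : ℝ) * q (k - 1) * B k) ∧
      ((1 / (n * (1 - π))) * ∑ k ∈ range n, ((n : ℝ) - k) * q (k + 1) * B k
          ≥ (1 / (n * (1 - π))) * ∑ k ∈ range (n + 1), ((n : ℝ) - k) * q k * B k))
    ↔
    (∀ j : ℕ, 1 ≤ j → j ≤ n - 1 →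
      ((n - 1).choose (j - 1) : ℝ)
        ≤ (π / (1 - π)) ^ ((n : ℤ) - (j : ℤ)) + (π / (1 - π)) ^ ((1 : ℤ) - (j : ℤ))) := by
  have h1π : (0:ℝ) < 1 - π := by linarith
  have h1πne : (1:ℝ) - π ≠ 0 := ne_of_gt h1π
  set r : ℝ := π / (1 - π) with hrdef
  have hr : 0 < r := div_pos hπ0 h1π
  have hrne : r ≠ 0 := ne_of_gt hr
  have hrπ : r * (1 - π) = π := div_mul_cancel₀ _ h1πne
  set m : ℕ := n - 1 with hmdef
  have hmn : m + 1 = n := by omega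
  have hm1 : 1 ≤ m := by omega
  have hnpos : (0:ℝ) < (n:ℝ) := by exact_mod_cast (show 0 < n by omega)
  -- power identity
  have hpow : ∀ j, j ≤ n → (1 - π) ^ n * r ^ j = π ^ j * (1 - π) ^ (n - j) := by
    intro j hj
    have h : (1 - π) ^ n = (1 - π) ^ (n - j) * (1 - π) ^ j := by
      rw [← pow_add]; congr 1; omega
    rw [h, hrdef, div_pow]
    field_simp
  -- reindex helper
  have hreidx : ∀ (M : ℕ) (h : ℕ → ℝ), ∑ j ∈ Icc 1 M, h j = ∑ k ∈ range M, h (k + 1) := by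
    intro M h
    rw [← Finset.Ico_add_one_right_eq_Icc, Finset.sum_Ico_eq_sum_range]
    apply Finset.sum_congr (by norm_num)
    intro k _
    congr 1
    omega
  -- choose identity (cast)
  have hcho : ∀ j, 1 ≤ j → j ≤ n → ((j:ℝ)) * (n.choose j : ℝ) = (n:ℝ) * (m.choose (j-1) : ℝ) := by
    intro j h1 hj
    have h := Nat.add_one_mul_choose_eq (n - 1) (j - 1)
    rw [show n - 1 + 1 = n from by omega, show j - 1 + 1 = j from by omega] at h
    have := congrArg (Nat.cast (R := ℝ)) h
    push_cast at this
    rw [hmdef]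
    linarith
  have hnk : ∀ k, k < n → ((n:ℝ) - (k:ℝ)) * (n.choose k : ℝ) = (n:ℝ) * (m.choose k : ℝ) := by
    intro k hk
    have h := Nat.choose_succ_right_eq n k
    have hc := congrArg (Nat.cast (R := ℝ)) h
    push_cast [Nat.cast_sub (le_of_lt hk)] at hc
    have h2 := hcho (k+1) (by omega) (by omega)
    rw [show k + 1 - 1 = k from by omega] at h2
    push_cast at h2
    linear_combination h2 - hc
  have hBval : ∀ k, k ≤ n → B k = (n.choose k : ℝ) * ((1-π)^n * r^k) := by
    intro k hk
    rw [hB k, mul_assoc, ← hpow k hk]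
  -- pointwise identity 1 : for 1 ≤ j ≤ m
  have hpt1 : ∀ j, 1 ≤ j → j ≤ m →
      (j:ℝ) * B j - ((j:ℝ)+1) * B (j+1)
        = (n:ℝ) * (1-π)^n * (((m.choose (j-1) : ℝ) - (m.choose j : ℝ) * r) * r ^ j) := by
    intro j h1 hj
    rw [hBval j (by omega), hBval (j+1) (by omega)]
    have hc1 := hcho j h1 (by omega)
    have hc2 : ((j:ℝ)+1) * (n.choose (j+1) : ℝ) = (n:ℝ) * (m.choose j : ℝ) := by
      have := hcho (j+1) (by omega) (by omega)
      rw [show j + 1 - 1 = j from by omega] at this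
      push_cast at this
      linarith
    linear_combination ((1-π)^n * r^j) * hc1 - ((1-π)^n * r^(j+1)) * hc2
  -- pointwise identity 2 : for k < m
  have hpt2 : ∀ k, k < m →
      π * (((n:ℝ) - (k:ℝ)) * B k - ((n:ℝ) - ((k:ℝ)+1)) * B (k+1))
        = (n:ℝ) * (1-π)^(n+1) * (((m.choose k : ℝ) - (m.choose (k+1) : ℝ) * r) * r ^ (k+1)) := by
    intro k hk
    rw [hBval k (by omega), hBval (k+1) (by omega)]
    have h1 := hnk k (by omega)
    have h2 := hnk (k+1) (by omega)
    push_cast at h2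
    linear_combination (π * (1-π)^n * r^k) * h1 - (π * (1-π)^n * r^(k+1)) * h2
      - ((n:ℝ)*(1-π)^n*((m.choose k : ℝ) * r^k - (m.choose (k+1) : ℝ) * r^(k+1))) * hrπ
  -- sum identity 1
  have hid1 : ∀ q : ℕ → ℝ, q 0 = 0 → q n = 1 →
      (∑ k ∈ range (n+1), (k:ℝ) * q k * B k) - (∑ k ∈ Icc 1 n, (k:ℝ) * q (k-1) * B k)
      = (n:ℝ) * (1-π)^n *
          (r ^ n + ∑ j ∈ Icc 1 m, ((m.choose (j-1):ℝ) - (m.choose j:ℝ)*r) * r^j * q j) := by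
    intro q hq0 hqn
    rw [hreidx n (fun k => (k:ℝ) * q (k-1) * B k)]
    simp only [Nat.add_sub_cancel]
    rw [Finset.sum_range_succ, hqn, add_sub_right_comm, ← Finset.sum_sub_distrib]
    rw [show range n = range (m+1) from by rw [hmn], Finset.sum_range_succ']
    have hz : ((0:ℕ):ℝ) * q 0 * B 0 - ((0+1:ℕ):ℝ) * q 0 * B (0+1) = 0 := by
      rw [hq0]; ring
    rw [hz, add_zero]
    have hterm : ∀ k ∈ range m,
        ((k+1:ℕ):ℝ) * q (k+1) * B (k+1) - ((k+1+1:ℕ):ℝ) * q (k+1) * B (k+1+1)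
        = (n:ℝ) * (1-π)^n * (((m.choose k:ℝ) - (m.choose (k+1):ℝ)*r) * r^(k+1) * q (k+1)) := by
      intro k hk
      rw [Finset.mem_range] at hk
      have h := hpt1 (k+1) (by omega) (by omega)
      rw [show k + 1 - 1 = k from by omega] at h
      push_cast at h ⊢
      linear_combination (q (k+1)) * h
    rw [Finset.sum_congr rfl hterm]
    rw [hreidx m (fun j => ((m.choose (j-1):ℝ) - (m.choose j:ℝ)*r) * r^j * q j)]
    simp only [Nat.add_sub_cancel]
    rw [mul_add, Finset.mul_sum, hBval n le_rfl, Nat.choose_self]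
    push_cast
    ring
  -- sum identity 2
  have hid2 : ∀ q : ℕ → ℝ, q 0 = 0 → q n = 1 →
      π * ((∑ k ∈ range n, ((n:ℝ) - k) * q (k+1) * B k)
            - (∑ k ∈ range (n+1), ((n:ℝ) - k) * q k * B k))
      = (n:ℝ) * (1-π)^(n+1) *
          (r ^ n + ∑ j ∈ Icc 1 m, ((m.choose (j-1):ℝ) - (m.choose j:ℝ)*r) * r^j * q j) := by
    intro q hq0 hqn
    rw [Finset.sum_range_succ]
    rw [show ((n:ℝ) - ((n:ℕ):ℝ)) * q n * B n = 0 from by rw [sub_self, zero_mul, zero_mul],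
      add_zero]
    rw [show range n = range (m+1) from by rw [hmn], Finset.sum_range_succ,
      Finset.sum_range_succ']
    rw [show ((n:ℝ) - ((0:ℕ):ℝ)) * q 0 * B 0 = 0 from by rw [hq0]; ring, add_zero]
    rw [show q (m+1) = 1 from by rw [hmn, hqn]]
    rw [add_sub_right_comm, ← Finset.sum_sub_distrib, mul_add, Finset.mul_sum]
    have hterm2 : ∀ k ∈ range m,
        π * (((n:ℝ) - (k:ℕ)) * q (k+1) * B k - ((n:ℝ) - ((k+1:ℕ):ℝ)) * q (k+1) * B (k+1))
        = (n:ℝ) * (1-π)^(n+1) * (((m.choose k:ℝ) - (m.choose (k+1):ℝ)*r) * r^(k+1) * q (k+1)) := by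
      intro k hk
      rw [Finset.mem_range] at hk
      have h := hpt2 k hk
      push_cast at h ⊢
      linear_combination (q (k+1)) * h
    rw [Finset.sum_congr rfl hterm2]
    rw [hreidx m (fun j => ((m.choose (j-1):ℝ) - (m.choose j:ℝ)*r) * r^j * q j)]
    simp only [Nat.add_sub_cancel]
    rw [mul_add, Finset.mul_sum]
    rw [hBval m (by omega)]
    have hm2 := hnk m (by omega)
    rw [Nat.choose_self] at hm2
    push_cast at hm2
    have hrn : r^n = r^m * r := by rw [← pow_succ, hmn]
    linear_combination (π * (1-π)^n * r^m) * hm2 - ((n:ℝ)*(1-π)^n*(1-π)) * hrn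
      - ((n:ℝ)*(1-π)^n*r^m) * hrπ
  -- identities in obicD form
  have hid1' : ∀ q : ℕ → ℝ, q 0 = 0 → q n = 1 →
      (∑ k ∈ range (n+1), (k:ℝ) * q k * B k) - (∑ k ∈ Icc 1 n, (k:ℝ) * q (k-1) * B k)
      = (n:ℝ) * (1-π)^n * (r ^ n + ∑ j ∈ Icc 1 m, obicD m r j * r^j * q j) := by
    intro q h h'
    simpa only [obicD] using hid1 q h h'
  have hid2' : ∀ q : ℕ → ℝ, q 0 = 0 → q n = 1 →
      π * ((∑ k ∈ range n, ((n:ℝ) - k) * q (k+1) * B k)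
            - (∑ k ∈ range (n+1), ((n:ℝ) - k) * q k * B k))
      = (n:ℝ) * (1-π)^(n+1) * (r ^ n + ∑ j ∈ Icc 1 m, obicD m r j * r^j * q j) := by
    intro q h h'
    simpa only [obicD] using hid2 q h h'
  have hc1pos : (0:ℝ) < 1 / ((n:ℝ) * π) := by positivity
  have hc2pos : (0:ℝ) < 1 / ((n:ℝ) * (1-π)) := by positivity
  have hn1pos : (0:ℝ) < (n:ℝ) * (1-π)^n := by positivity
  have hn2pos : (0:ℝ) < (n:ℝ) * (1-π)^(n+1) := by positivity
  -- both OBIC inequalities are equivalent to nonnegativity of S q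
  have hSgood : ∀ q : ℕ → ℝ, (∀ k ≤ n, 0 ≤ q k ∧ q k ≤ 1) → q 0 = 0 → q n = 1 →
      ((((1 / (n * π)) * ∑ k ∈ range (n + 1), (k : ℝ) * q k * B k
          ≥ (1 / (n * π)) * ∑ k ∈ Icc 1 n, (k : ℝ) * q (k - 1) * B k) ∧
      ((1 / (n * (1 - π))) * ∑ k ∈ range n, ((n : ℝ) - k) * q (k + 1) * B k
          ≥ (1 / (n * (1 - π))) * ∑ k ∈ range (n + 1), ((n : ℝ) - k) * q k * B k))
      ↔ 0 ≤ r ^ n + ∑ j ∈ Icc 1 m, obicD m r j * r^j * q j) := by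
    intro q hqb hq0 hqn
    have h1 := hid1' q hq0 hqn
    have h2 := hid2' q hq0 hqn
    constructor
    · rintro ⟨ha, _⟩
      rw [ge_iff_le] at ha
      have ha' := (mul_le_mul_iff_right₀ hc1pos).1 ha
      have h0 : 0 ≤ (n:ℝ) * (1-π)^n * (r ^ n + ∑ j ∈ Icc 1 m, obicD m r j * r^j * q j) := by
        rw [← h1]; linarith
      exact (mul_nonneg_iff_of_pos_left hn1pos).1 h0
    · intro hS
      constructor
      · rw [ge_iff_le]
        apply (mul_le_mul_iff_right₀ hc1pos).2
        have h0 : 0 ≤ (n:ℝ) * (1-π)^n * (r ^ n + ∑ j ∈ Icc 1 m, obicD m r j * r^j * q j) :=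
          mul_nonneg (le_of_lt hn1pos) hS
        rw [← h1] at h0
        linarith
      · rw [ge_iff_le]
        apply (mul_le_mul_iff_right₀ hc2pos).2
        have h0 : 0 ≤ (n:ℝ) * (1-π)^(n+1) * (r ^ n + ∑ j ∈ Icc 1 m, obicD m r j * r^j * q j) :=
          mul_nonneg (le_of_lt hn2pos) hS
        rw [← h2] at h0
        have h0' : 0 ≤ (∑ k ∈ range n, ((n:ℝ) - k) * q (k+1) * B k)
            - (∑ k ∈ range (n+1), ((n:ℝ) - k) * q k * B k) := by nlinarith
        linarith
  -- main reduction: the universal statement is equivalent to the worst-case bound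
  have hmain : (∀ q : ℕ → ℝ, (∀ k ≤ n, 0 ≤ q k ∧ q k ≤ 1) → q 0 = 0 → q n = 1 →
      ((1 / (n * π)) * ∑ k ∈ range (n + 1), (k : ℝ) * q k * B k
          ≥ (1 / (n * π)) * ∑ k ∈ Icc 1 n, (k : ℝ) * q (k - 1) * B k) ∧
      ((1 / (n * (1 - π))) * ∑ k ∈ range n, ((n : ℝ) - k) * q (k + 1) * B k
          ≥ (1 / (n * (1 - π))) * ∑ k ∈ range (n + 1), ((n : ℝ) - k) * q k * B k))
      ↔ ∑ j ∈ Icc 1 m, max (obicD m r j) 0 * r ^ j ≤ r := by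
    constructor
    · intro hall
      set q : ℕ → ℝ := fun k => if k = n then 1 else if k = 0 then 0
        else if obicD m r k < 0 then 1 else 0 with hqdef
      have h0n : (0:ℕ) ≠ n := by omega
      have hq0 : q 0 = 0 := by simp [hqdef, h0n]
      have hqn : q n = 1 := by simp [hqdef]
      have hqb : ∀ k ≤ n, 0 ≤ q k ∧ q k ≤ 1 := by
        intro k _
        simp only [hqdef]
        split_ifs <;> norm_num
      have hS := (hSgood q hqb hq0 hqn).1 (hall q hqb hq0 hqn)
      have hterm : ∀ j ∈ Icc 1 m, obicD m r j * r^j * q j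
          = obicD m r j * r^j - max (obicD m r j) 0 * r^j := by
        intro j hj
        rw [Finset.mem_Icc] at hj
        simp only [hqdef]
        rw [if_neg (by omega), if_neg (by omega)]
        by_cases hd : obicD m r j < 0
        · rw [if_pos hd, max_eq_right (le_of_lt hd)]; ring
        · rw [if_neg hd, max_eq_left (le_of_not_gt hd)]; ring
      rw [Finset.sum_congr rfl hterm, Finset.sum_sub_distrib,
        obic_tel m r 1 le_rfl hm1] at hS
      simp only [show (1:ℕ) - 1 = 0 from rfl, Nat.choose_zero_right, Nat.cast_one, one_mul,
        pow_one] at hS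
      have hrn : r^n = r^(m+1) := by rw [hmn]
      rw [hrn] at hS
      linarith
    · intro hT q hqb hq0 hqn
      apply (hSgood q hqb hq0 hqn).2
      have hbound : ∀ j ∈ Icc 1 m,
          (obicD m r j - max (obicD m r j) 0) * r^j ≤ obicD m r j * r^j * q j := by
        intro j hj
        rw [Finset.mem_Icc] at hj
        obtain ⟨hq0', hq1'⟩ := hqb j (by omega)
        rcases le_or_gt 0 (obicD m r j) with hd | hd
        · rw [max_eq_left hd, sub_self, zero_mul]
          exact mul_nonneg (mul_nonneg hd (le_of_lt (pow_pos hr j))) hq0'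
        · rw [max_eq_right (le_of_lt hd), sub_zero]
          have hneg : obicD m r j * r^j ≤ 0 :=
            mul_nonpos_of_nonpos_of_nonneg (le_of_lt hd) (le_of_lt (pow_pos hr j))
          nlinarith
      have hsum := Finset.sum_le_sum hbound
      simp only [sub_mul] at hsum
      rw [Finset.sum_sub_distrib, obic_tel m r 1 le_rfl hm1] at hsum
      simp only [show (1:ℕ) - 1 = 0 from rfl, Nat.choose_zero_right, Nat.cast_one, one_mul,
        pow_one] at hsum
      have hrn : r^n = r^(m+1) := by rw [hmn]
      rw [hrn]
      linarith
  -- conversion of the pointwise condition to the zpow form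
  have hconv : ∀ j, 1 ≤ j → j ≤ m →
      (((m.choose (j-1):ℝ)) * r^j ≤ r^(m+1) + r ↔
        ((m.choose (j-1):ℝ)) ≤ r^((n:ℤ)-(j:ℤ)) + r^((1:ℤ)-(j:ℤ))) := by
    intro j h1 hj
    have hz1 : r ^ ((n:ℤ) - (j:ℤ)) = r ^ (n - j : ℕ) := by
      rw [show (n:ℤ) - (j:ℤ) = ((n - j : ℕ) : ℤ) from by omega, zpow_natCast]
    have hz2 : r ^ ((1:ℤ) - (j:ℤ)) = (r ^ (j - 1 : ℕ))⁻¹ := by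
      rw [show (1:ℤ) - (j:ℤ) = -(((j - 1 : ℕ)):ℤ) from by omega, zpow_neg, zpow_natCast]
    rw [hz1, hz2]
    rw [show r^(m+1) + r = (r ^ (n-j:ℕ) + (r ^ (j-1:ℕ))⁻¹) * r^j from ?_]
    · exact mul_le_mul_iff_left₀ (pow_pos hr j)
    · rw [add_mul]
      congr 1
      · rw [← pow_add]; congr 1; omega
      · rw [show r^j = r^(j-1) * r from by rw [← pow_succ]; congr 1; omega]
        rw [inv_mul_cancel_left₀ (pow_ne_zero _ hrne)]
  exact hmain.trans ((obic_keyEquiv m hm1 r hr).trans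
    (forall_congr' fun j => imp_congr_right fun h1 => imp_congr_right fun hj => hconv j h1 hj))
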